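/- Let q ≥ 1 be an integer, τ = 1/q, and α ≤ β real numbers with β − α + 2τ < 2π. Let c_a (a ∈ ℤ) be the Fourier coefficients of h_{α,β,τ} regarded as a function on ℝ/2πℤ. Then Σ_{a=0}^{∞} √a · |c_a| ≤ (4√3/π)·q^{1/2}. -/

import Mathlib

open MeasureTheory

/-- The cubic `g(x) = -2x³ + 3x²`. -/
noncomputable def gcube (x : ℝ) : ℝ := -2 * x ^ 3 + 3 * x ^ 2

/-- The smoothed bump function `h_{α,β,τ}`. -/
noncomputable def hfun (α β τ : ℝ) (x : ℝ) : ℝ :=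
  if x ≤ α - τ then 0
  else if x ≤ α then gcube ((x - α + τ) / τ)
  else if x ≤ β then 1
  else if x ≤ β + τ then gcube ((β + τ - x) / τ)
  else 0

/- derivative pieces -/
noncomputable def gd (u : ℝ) : ℝ := -6 * u ^ 2 + 6 * u
noncomputable def gdd (u : ℝ) : ℝ := -12 * u + 6

lemma hasDerivAt_gcube (u : ℝ) : HasDerivAt gcube (gd u) u := by
  unfold gcube
  have h := ((hasDerivAt_pow 3 u).const_mul (-2)).add ((hasDerivAt_pow 2 u).const_mul 3)
  exact h.congr_deriv (by simp [gd]; ring)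

lemma hasDerivAt_gd (u : ℝ) : HasDerivAt gd (gdd u) u := by
  unfold gd
  have h := ((hasDerivAt_pow 2 u).const_mul (-6)).add ((hasDerivAt_id u).const_mul 6)
  exact h.congr_deriv (by simp [gdd]; ring)

noncomputable def hderiv (α β τ : ℝ) (x : ℝ) : ℝ :=
  if x ≤ α - τ then 0
  else if x ≤ α then gd ((x - α + τ) / τ) / τ
  else if x ≤ β then 0
  else if x ≤ β + τ then -gd ((β + τ - x) / τ) / τ
  else 0

section ramps
variable {α β τ : ℝ}

/-- the up-ramp polynomial -/
noncomputable def P1 (α τ : ℝ) (x : ℝ) : ℝ := gcube ((x - α + τ) / τ)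
noncomputable def D1 (α τ : ℝ) (x : ℝ) : ℝ := gd ((x - α + τ) / τ) / τ
noncomputable def DD1 (α τ : ℝ) (x : ℝ) : ℝ := gdd ((x - α + τ) / τ) / τ ^ 2
/-- the down-ramp polynomial -/
noncomputable def P3 (β τ : ℝ) (x : ℝ) : ℝ := gcube ((β + τ - x) / τ)
noncomputable def D3 (β τ : ℝ) (x : ℝ) : ℝ := -gd ((β + τ - x) / τ) / τ
noncomputable def DD3 (β τ : ℝ) (x : ℝ) : ℝ := gdd ((β + τ - x) / τ) / τ ^ 2

lemma hasDerivAt_P1 (x : ℝ) : HasDerivAt (P1 α τ) (D1 α τ x) x := by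
  unfold P1
  have h1 : HasDerivAt (fun x : ℝ => (x - α + τ) / τ) (1 / τ) x := by
    simpa using (((hasDerivAt_id x).sub_const α).add_const τ).div_const τ
  have h := (hasDerivAt_gcube ((x - α + τ) / τ)).comp x h1
  exact h.congr_deriv (by simp [D1]; ring)

lemma hasDerivAt_D1 (x : ℝ) : HasDerivAt (D1 α τ) (DD1 α τ x) x := by
  unfold D1
  have h1 : HasDerivAt (fun x : ℝ => (x - α + τ) / τ) (1 / τ) x := by
    simpa using (((hasDerivAt_id x).sub_const α).add_const τ).div_const τ
  have h := ((hasDerivAt_gd ((x - α + τ) / τ)).comp x h1).div_const τ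
  exact h.congr_deriv (by simp [DD1]; ring)

lemma hasDerivAt_P3 (x : ℝ) : HasDerivAt (P3 β τ) (D3 β τ x) x := by
  unfold P3
  have h1 : HasDerivAt (fun x : ℝ => (β + τ - x) / τ) (-1 / τ) x := by
    simpa using ((hasDerivAt_id x).const_sub (β + τ)).div_const τ
  have h := (hasDerivAt_gcube ((β + τ - x) / τ)).comp x h1
  exact h.congr_deriv (by simp [D3]; ring)

lemma hasDerivAt_D3 (x : ℝ) : HasDerivAt (D3 β τ) (DD3 β τ x) x := by
  have h1 : HasDerivAt (fun x : ℝ => (β + τ - x) / τ) (-1 / τ) x := by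
    simpa using ((hasDerivAt_id x).const_sub (β + τ)).div_const τ
  have h := (((hasDerivAt_gd ((β + τ - x) / τ)).comp x h1).div_const τ).neg
  have : HasDerivAt (fun x => -(gd ((β + τ - x) / τ) / τ)) (DD3 β τ x) x := by
    exact h.congr_deriv (by simp [DD3]; ring)
  apply this.congr_of_eventuallyEq
  filter_upwards with y
  simp [D3, neg_div]

end ramps

/-- gluing lemma for derivatives -/
lemma glue_hasDerivAt {f g h : ℝ → ℝ} {c δ d : ℝ} (hδ : 0 < δ)
    (hl : ∀ x ∈ Set.Icc (c - δ) c, h x = f x) (hr : ∀ x ∈ Set.Icc c (c + δ), h x = g x)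
    (hfd : HasDerivAt f d c) (hgd : HasDerivAt g d c) : HasDerivAt h d c := by
  have h1 : HasDerivWithinAt h d (Set.Icc (c - δ) c) c :=
    (hfd.hasDerivWithinAt).congr hl (hl c ⟨by linarith, le_rfl⟩)
  have h2 : HasDerivWithinAt h d (Set.Icc c (c + δ)) c :=
    (hgd.hasDerivWithinAt).congr hr (hr c ⟨le_rfl, by linarith⟩)
  have h3 := h1.union h2
  rw [Set.Icc_union_Icc_eq_Icc (by linarith) (by linarith)] at h3
  exact h3.hasDerivAt (Icc_mem_nhds (by linarith) (by linarith))

section pieces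
variable {α β τ : ℝ}

lemma gcube_zero : gcube 0 = 0 := by simp [gcube]
lemma gcube_one : gcube 1 = 1 := by norm_num [gcube]
lemma gd_zero : gd 0 = 0 := by simp [gd]
lemma gd_one : gd 1 = 0 := by norm_num [gd]

lemma hfun_e0 (x : ℝ) (hx : x ≤ α - τ) : hfun α β τ x = 0 := by simp [hfun, hx]

lemma hfun_e1 (htau : 0 < τ) (x : ℝ) (hx : x ∈ Set.Icc (α - τ) α) :
    hfun α β τ x = P1 α τ x := by
  rcases eq_or_lt_of_le hx.1 with h | h
  · rw [hfun, if_pos h.symm.le, P1]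
    rw [← h]
    norm_num [gcube_zero]
  · rw [hfun, if_neg (by linarith), if_pos hx.2, P1]

lemma hfun_e2 (htau : 0 < τ) (x : ℝ) (hx : x ∈ Set.Icc α β) : hfun α β τ x = 1 := by
  rcases eq_or_lt_of_le hx.1 with h | h
  · rw [hfun, if_neg (by linarith), if_pos h.symm.le, ← h]
    have : (α - α + τ) / τ = 1 := by field_simp; ring
    rw [this, gcube_one]
  · rw [hfun, if_neg (by linarith), if_neg (by linarith), if_pos hx.2]

lemma hfun_e3 (htau : 0 < τ) (hab : α ≤ β) (x : ℝ) (hx : x ∈ Set.Icc β (β + τ)) :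
    hfun α β τ x = P3 β τ x := by
  rcases eq_or_lt_of_le hx.1 with h | h
  · rw [← h, P3]
    have h2 : (β + τ - β) / τ = 1 := by field_simp; ring
    rw [h2, gcube_one]
    exact hfun_e2 htau β ⟨hab, le_rfl⟩
  · rw [hfun, if_neg (by linarith), if_neg (by linarith), if_neg (by linarith), if_pos hx.2, P3]

lemma hfun_e4 (htau : 0 < τ) (hab : α ≤ β) (x : ℝ) (hx : β + τ ≤ x) : hfun α β τ x = 0 := by
  rcases eq_or_lt_of_le hx with h | h
  · rw [hfun, if_neg (by linarith), if_neg (by linarith), if_neg (by linarith), if_pos h.ge, ← h]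
    norm_num [gcube_zero]
  · rw [hfun, if_neg (by linarith), if_neg (by linarith), if_neg (by linarith), if_neg (by linarith)]

lemma hderiv_f1 (htau : 0 < τ) (x : ℝ) (hx : x ∈ Set.Icc (α - τ) α) :
    hderiv α β τ x = D1 α τ x := by
  rcases eq_or_lt_of_le hx.1 with h | h
  · rw [hderiv, if_pos h.symm.le, D1, ← h]
    norm_num [gd_zero]
  · rw [hderiv, if_neg (by linarith), if_pos hx.2, D1]

lemma hderiv_f2 (htau : 0 < τ) (x : ℝ) (hx : x ∈ Set.Icc α β) : hderiv α β τ x = 0 := by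
  rcases eq_or_lt_of_le hx.1 with h | h
  · rw [hderiv, if_neg (by linarith), if_pos h.symm.le, ← h]
    have : (α - α + τ) / τ = 1 := by field_simp; ring
    rw [this, gd_one, zero_div]
  · rw [hderiv, if_neg (by linarith), if_neg (by linarith), if_pos hx.2]

lemma hderiv_f3 (htau : 0 < τ) (hab : α ≤ β) (x : ℝ) (hx : x ∈ Set.Icc β (β + τ)) :
    hderiv α β τ x = D3 β τ x := by
  rcases eq_or_lt_of_le hx.1 with h | h
  · rw [← h, D3]
    have h2 : (β + τ - β) / τ = 1 := by field_simp; ring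
    rw [h2, gd_one]
    norm_num
    exact hderiv_f2 htau β ⟨hab, le_rfl⟩
  · rw [hderiv, if_neg (by linarith), if_neg (by linarith), if_neg (by linarith), if_pos hx.2, D3]

lemma hderiv_f4 (htau : 0 < τ) (hab : α ≤ β) (x : ℝ) (hx : β + τ ≤ x) : hderiv α β τ x = 0 := by
  rcases eq_or_lt_of_le hx with h | h
  · rw [hderiv, if_neg (by linarith), if_neg (by linarith), if_neg (by linarith), if_pos h.ge, ← h]
    norm_num [gd_zero]
  · rw [hderiv, if_neg (by linarith), if_neg (by linarith), if_neg (by linarith), if_neg (by linarith)]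

lemma hderiv_f0 (x : ℝ) (hx : x ≤ α - τ) : hderiv α β τ x = 0 := by simp [hderiv, hx]

lemma hasDerivAt_hfun (htau : 0 < τ) (hab : α ≤ β) (x : ℝ) :
    HasDerivAt (hfun α β τ) (hderiv α β τ x) x := by
  rcases lt_trichotomy x (α - τ) with h1 | h1 | h1
  · rw [hderiv_f0 x h1.le]
    apply glue_hasDerivAt (f := fun _ => 0) (g := fun _ => 0) (show (0:ℝ) < α - τ - x by linarith)
      (fun y hy => hfun_e0 y (by linarith [hy.2])) (fun y hy => hfun_e0 y (by linarith [hy.2]))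
      (hasDerivAt_const _ _) (hasDerivAt_const _ _)
  · -- x = α - τ
    have hd : hderiv α β τ x = D1 α τ x := hderiv_f1 htau x ⟨by linarith, by linarith⟩
    rw [hd]
    have hv : D1 α τ x = 0 := by rw [D1, h1]; norm_num [gd_zero]
    apply glue_hasDerivAt (f := fun _ => 0) (g := P1 α τ) htau
      (fun y hy => hfun_e0 y (by linarith [hy.2]))
      (fun y hy => hfun_e1 htau y ⟨by linarith [hy.1], by linarith [hy.2]⟩)
    · rw [hv]; exact hasDerivAt_const _ _
    · exact hasDerivAt_P1 x
  rcases lt_trichotomy x α with h2 | h2 | h2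
  · -- α - τ < x < α
    rw [hderiv_f1 htau x ⟨h1.le, h2.le⟩]
    apply glue_hasDerivAt (f := P1 α τ) (g := P1 α τ) (show (0:ℝ) < min (x - (α - τ)) (α - x) by
        simp [lt_min_iff]; constructor <;> linarith)
      (fun y hy => hfun_e1 htau y ⟨by have := min_le_left (x - (α - τ)) (α - x); linarith [hy.1], by linarith [hy.2]⟩)
      (fun y hy => hfun_e1 htau y ⟨by linarith [hy.1], by have := min_le_right (x - (α - τ)) (α - x); linarith [hy.2]⟩)
      (hasDerivAt_P1 x) (hasDerivAt_P1 x)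
  · -- x = α
    have hd : hderiv α β τ x = D1 α τ x := hderiv_f1 htau x ⟨by linarith, h2.le⟩
    have hv : D1 α τ x = 0 := by
      rw [D1, h2]
      have : (α - α + τ) / τ = 1 := by field_simp; ring
      rw [this, gd_one, zero_div]
    rw [hd, hv]
    rcases eq_or_lt_of_le hab with hb | hb
    · -- α = β : glue P1 and P3
      apply glue_hasDerivAt (f := P1 α τ) (g := P3 β τ) htau
        (fun y hy => hfun_e1 htau y ⟨by linarith [hy.1], by linarith [hy.2]⟩)
        (fun y hy => hfun_e3 htau hab y ⟨by rw [← hb]; linarith [hy.1], by rw [← hb]; linarith [hy.2]⟩)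
      · have := hasDerivAt_P1 (α := α) (τ := τ) x
        have e : D1 α τ x = 0 := hv
        rw [← e]; exact this
      · have := hasDerivAt_P3 (β := β) (τ := τ) x
        have e : D3 β τ x = 0 := by
          rw [D3, h2, ← hb]
          have : (α + τ - α) / τ = 1 := by field_simp; ring
          rw [this, gd_one]; norm_num
        rw [← e]; exact this
    · -- α < β : glue P1 and const 1
      apply glue_hasDerivAt (f := P1 α τ) (g := fun _ => 1) (show (0:ℝ) < min τ (β - α) by
          simp [lt_min_iff]; constructor <;> linarith)
        (fun y hy => hfun_e1 htau y ⟨by have := min_le_left τ (β - α); linarith [hy.1], by linarith [hy.2]⟩)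
        (fun y hy => hfun_e2 htau y ⟨by linarith [hy.1], by have := min_le_right τ (β - α); linarith [hy.2]⟩)
      · rw [← hv]; exact hasDerivAt_P1 x
      · exact hasDerivAt_const _ _
  rcases lt_trichotomy x β with h3 | h3 | h3
  · -- α < x < β
    rw [hderiv_f2 htau x ⟨h2.le, h3.le⟩]
    apply glue_hasDerivAt (f := fun _ => 1) (g := fun _ => 1) (show (0:ℝ) < min (x - α) (β - x) by
        simp [lt_min_iff]; constructor <;> linarith)
      (fun y hy => hfun_e2 htau y ⟨by have := min_le_left (x - α) (β - x); linarith [hy.1], by linarith [hy.2]⟩)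
      (fun y hy => hfun_e2 htau y ⟨by linarith [hy.1], by have := min_le_right (x - α) (β - x); linarith [hy.2]⟩)
      (hasDerivAt_const _ _) (hasDerivAt_const _ _)
  · -- x = β (with α < β)
    have hd : hderiv α β τ x = 0 := hderiv_f2 htau x ⟨h2.le, h3.le⟩
    rw [hd]
    apply glue_hasDerivAt (f := fun _ => 1) (g := P3 β τ) (show (0:ℝ) < min τ (β - α) by
        simp [lt_min_iff]; constructor <;> linarith)
      (fun y hy => hfun_e2 htau y ⟨by have := min_le_right τ (β - α); linarith [hy.1], by linarith [hy.2]⟩)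
      (fun y hy => hfun_e3 htau hab y ⟨by linarith [hy.1], by have := min_le_left τ (β - α); linarith [hy.2]⟩)
      (hasDerivAt_const _ _)
    · have e : D3 β τ x = 0 := by
        rw [D3, h3]
        have : (β + τ - β) / τ = 1 := by field_simp; ring
        rw [this, gd_one]; norm_num
      rw [← e]; exact hasDerivAt_P3 x
  rcases lt_trichotomy x (β + τ) with h4 | h4 | h4
  · -- β < x < β + τ
    rw [hderiv_f3 htau hab x ⟨h3.le, h4.le⟩]
    apply glue_hasDerivAt (f := P3 β τ) (g := P3 β τ) (show (0:ℝ) < min (x - β) (β + τ - x) by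
        simp [lt_min_iff]; constructor <;> linarith)
      (fun y hy => hfun_e3 htau hab y ⟨by have := min_le_left (x - β) (β + τ - x); linarith [hy.1], by linarith [hy.2]⟩)
      (fun y hy => hfun_e3 htau hab y ⟨by linarith [hy.1], by have := min_le_right (x - β) (β + τ - x); linarith [hy.2]⟩)
      (hasDerivAt_P3 x) (hasDerivAt_P3 x)
  · -- x = β + τ
    have hd : hderiv α β τ x = 0 := hderiv_f4 htau hab x h4.ge
    rw [hd]
    apply glue_hasDerivAt (f := P3 β τ) (g := fun _ => 0) htau
      (fun y hy => hfun_e3 htau hab y ⟨by linarith [hy.1], by linarith [hy.2]⟩)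
      (fun y hy => hfun_e4 htau hab y (by linarith [hy.1]))
    · have e : D3 β τ x = 0 := by
        rw [D3, h4]
        have : (β + τ - (β + τ)) / τ = 0 := by field_simp; ring
        rw [this, gd_zero]; norm_num
      rw [← e]; exact hasDerivAt_P3 x
    · exact hasDerivAt_const _ _
  · -- x > β + τ
    rw [hderiv_f4 htau hab x h4.le]
    apply glue_hasDerivAt (f := fun _ => 0) (g := fun _ => 0) (show (0:ℝ) < x - (β + τ) by linarith)
      (fun y hy => hfun_e4 htau hab y (by linarith [hy.1]))
      (fun y hy => hfun_e4 htau hab y (by linarith [hy.1]))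
      (hasDerivAt_const _ _) (hasDerivAt_const _ _)

lemma continuous_hfun (htau : 0 < τ) (hab : α ≤ β) : Continuous (hfun α β τ) :=
  continuous_iff_continuousAt.2 fun x => (hasDerivAt_hfun htau hab x).continuousAt

end pieces

/-- The `2π`-periodization of `h_{α,β,τ}`, i.e. `h_{α,β,τ}` regarded as a function on
`ℝ/2πℤ`. -/
noncomputable def hper (α β τ : ℝ) (x : ℝ) : ℝ :=
  ∑' k : ℤ, hfun α β τ (x + 2 * Real.pi * k)

/-- The Fourier coefficients of `h_{α,β,τ}` regarded as a function on `ℝ/2πℤ`: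
`c_a = (1/2π) ∫ over one period of the periodization of h(x) e^{-iax} dx`. -/
noncomputable def fourierC (α β τ : ℝ) (a : ℤ) : ℂ :=
  (1 / (2 * Real.pi)) *
    ∫ x in (0 : ℝ)..(2 * Real.pi), (hper α β τ x : ℂ) * Complex.exp (-Complex.I * a * x)


section periodization
variable {α β τ : ℝ}

lemma hper_periodic : Function.Periodic (hper α β τ) (2 * Real.pi) := by
  intro x
  unfold hper
  rw [← (Equiv.addRight (1 : ℤ)).tsum_eq (fun k : ℤ => hfun α β τ (x + 2 * Real.pi * k))]
  apply tsum_congr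
  intro k
  simp only [Equiv.coe_addRight]
  congr 1
  push_cast
  ring

lemma hper_eq_hfun (htau : 0 < τ) (hab : α ≤ β) (hlen : β - α + 2 * τ < 2 * Real.pi)
    (x : ℝ) (hx : x ∈ Set.Icc (α - τ) (α - τ + 2 * Real.pi)) : hper α β τ x = hfun α β τ x := by
  unfold hper
  rw [tsum_eq_single (0 : ℤ)]
  · norm_num
  · intro k hk
    rcases lt_or_gt_of_ne hk with hneg | hpos
    · have hk1 : (k : ℝ) ≤ -1 := by exact_mod_cast Int.le_sub_one_of_lt hneg
      have hpi := Real.pi_pos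
      apply hfun_e0
      nlinarith [hx.2]
    · have hk1 : (1 : ℝ) ≤ (k : ℝ) := by exact_mod_cast hpos
      have hpi := Real.pi_pos
      apply hfun_e4 htau hab
      nlinarith [hx.1]

lemma fourierC_eq (htau : 0 < τ) (hab : α ≤ β) (hlen : β - α + 2 * τ < 2 * Real.pi) (a : ℤ) :
    fourierC α β τ a = (1 / (2 * Real.pi)) *
      ∫ x in (α - τ)..(β + τ), (hfun α β τ x : ℂ) * Complex.exp (-Complex.I * a * x) := by
  have hpi := Real.pi_pos
  set E : ℝ → ℂ := fun x => Complex.exp (-Complex.I * a * x) with hE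
  have hFper : Function.Periodic (fun x => (hper α β τ x : ℂ) * E x) (2 * Real.pi) := by
    intro x
    have h1 : hper α β τ (x + 2 * Real.pi) = hper α β τ x := hper_periodic x
    have h2 : E (x + 2 * Real.pi) = E x := by
      rw [hE]
      simp only
      have : (-Complex.I * a * ((x : ℝ) + 2 * Real.pi) : ℂ) =
          -Complex.I * a * x + (-a : ℤ) * (2 * Real.pi * Complex.I) := by push_cast; ring
      rw [show ((x + 2 * Real.pi : ℝ) : ℂ) = ((x : ℝ) : ℂ) + 2 * Real.pi by push_cast; ring, this,
        Complex.exp_add, Complex.exp_int_mul_two_pi_mul_I, mul_one]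
    simp [h1, h2]
  have hshift : (∫ x in (0 : ℝ)..(2 * Real.pi), (hper α β τ x : ℂ) * E x) =
      ∫ x in (α - τ)..(α - τ + 2 * Real.pi), (hper α β τ x : ℂ) * E x := by
    have := hFper.intervalIntegral_add_eq 0 (α - τ)
    simpa using this
  have hcongr : (∫ x in (α - τ)..(α - τ + 2 * Real.pi), (hper α β τ x : ℂ) * E x) =
      ∫ x in (α - τ)..(α - τ + 2 * Real.pi), (hfun α β τ x : ℂ) * E x := by
    apply intervalIntegral.integral_congr
    intro x hx
    rw [Set.uIcc_of_le (by linarith)] at hx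
    simp only []
    rw [hper_eq_hfun htau hab hlen x hx]
  have hcont : Continuous fun x => (hfun α β τ x : ℂ) * E x := by
    apply Continuous.mul
    · exact Complex.continuous_ofReal.comp (continuous_hfun htau hab)
    · exact Complex.continuous_exp.comp (by fun_prop)
  have hsplit : (∫ x in (α - τ)..(β + τ), (hfun α β τ x : ℂ) * E x) +
      (∫ x in (β + τ)..(α - τ + 2 * Real.pi), (hfun α β τ x : ℂ) * E x) =
      ∫ x in (α - τ)..(α - τ + 2 * Real.pi), (hfun α β τ x : ℂ) * E x :=
    intervalIntegral.integral_add_adjacent_intervals (hcont.intervalIntegrable _ _) (hcont.intervalIntegrable _ _)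
  have hzero : (∫ x in (β + τ)..(α - τ + 2 * Real.pi), (hfun α β τ x : ℂ) * E x) = 0 := by
    rw [intervalIntegral.integral_congr (g := fun _ => 0), intervalIntegral.integral_zero]
    intro x hx
    rw [Set.uIcc_of_le (by linarith)] at hx
    simp [hfun_e4 htau hab x hx.1]
  rw [fourierC, hshift, hcongr, ← hsplit, hzero, add_zero]

end periodization

section integrals
variable {α β τ : ℝ} {EE : Type*} [NormedAddCommGroup EE]

lemma II_congr {f g : ℝ → EE} {a b : ℝ} (hab : a ≤ b) (h : Set.EqOn g f (Set.Icc a b))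
    (hg : IntervalIntegrable g volume a b) : IntervalIntegrable f volume a b := by
  rw [intervalIntegrable_iff_integrableOn_Icc_of_le hab] at hg ⊢
  exact hg.congr_fun h measurableSet_Icc

lemma continuous_D1 : Continuous (D1 α τ) := by unfold D1 gd; fun_prop
lemma continuous_D3 : Continuous (D3 β τ) := by unfold D3 gd; fun_prop
lemma continuous_DD1 : Continuous (DD1 α τ) := by unfold DD1 gdd; fun_prop
lemma continuous_DD3 : Continuous (DD3 β τ) := by unfold DD3 gdd; fun_prop

lemma gd_nonneg {u : ℝ} (h0 : 0 ≤ u) (h1 : u ≤ 1) : 0 ≤ gd u := by unfold gd; nlinarith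

/-- argument of the up ramp is in `[0,1]` -/
lemma ramp1_mem (htau : 0 < τ) {x : ℝ} (hx : x ∈ Set.Icc (α - τ) α) :
    (x - α + τ) / τ ∈ Set.Icc (0:ℝ) 1 := by
  constructor
  · apply div_nonneg (by linarith [hx.1]) htau.le
  · rw [div_le_one htau]; linarith [hx.2]

lemma ramp3_mem (htau : 0 < τ) {x : ℝ} (hx : x ∈ Set.Icc β (β + τ)) :
    (β + τ - x) / τ ∈ Set.Icc (0:ℝ) 1 := by
  constructor
  · apply div_nonneg (by linarith [hx.2]) htau.le
  · rw [div_le_one htau]; linarith [hx.1]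

lemma D1_nonneg (htau : 0 < τ) {x : ℝ} (hx : x ∈ Set.Icc (α - τ) α) : 0 ≤ D1 α τ x := by
  have := ramp1_mem htau hx
  exact div_nonneg (gd_nonneg this.1 this.2) htau.le

lemma D3_nonpos (htau : 0 < τ) {x : ℝ} (hx : x ∈ Set.Icc β (β + τ)) : D3 β τ x ≤ 0 := by
  have := ramp3_mem htau hx
  rw [D3, neg_div]
  simp only [neg_nonpos]
  exact div_nonneg (gd_nonneg this.1 this.2) htau.le

lemma int_D1 (htau : 0 < τ) : ∫ x in (α - τ)..α, D1 α τ x = 1 := by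
  rw [intervalIntegral.integral_eq_sub_of_hasDerivAt (fun x _ => hasDerivAt_P1 x)
    (continuous_D1.intervalIntegrable _ _)]
  have h1 : (α - α + τ) / τ = 1 := by field_simp; ring
  have h2 : (α - τ - α + τ) / τ = 0 := by field_simp; ring
  rw [P1, P1, h1, h2, gcube_one, gcube_zero, sub_zero]

lemma int_negD3 (htau : 0 < τ) : ∫ x in β..(β + τ), (-D3 β τ x) = 1 := by
  rw [intervalIntegral.integral_eq_sub_of_hasDerivAt (f := fun x => -P3 β τ x)
    (fun x _ => (hasDerivAt_P3 x).neg) ((continuous_D3.neg).intervalIntegrable _ _)]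
  have h1 : (β + τ - (β + τ)) / τ = 0 := by field_simp; ring
  have h2 : (β + τ - β) / τ = 1 := by field_simp; ring
  rw [P3, P3, h1, h2, gcube_one, gcube_zero]
  ring

lemma int_abs_hderiv (htau : 0 < τ) (hab : α ≤ β) :
    ∫ x in (α - τ)..(β + τ), |hderiv α β τ x| = 2 := by
  have e1 : (∫ x in (α - τ)..α, |hderiv α β τ x|) = 1 := by
    rw [intervalIntegral.integral_congr (g := D1 α τ), int_D1 htau]
    intro x hx
    dsimp only
    rw [Set.uIcc_of_le (by linarith)] at hx
    rw [hderiv_f1 htau x hx, abs_of_nonneg (D1_nonneg htau hx)]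
  have e2 : (∫ x in α..β, |hderiv α β τ x|) = 0 := by
    rw [intervalIntegral.integral_congr (g := fun _ => 0), intervalIntegral.integral_zero]
    intro x hx
    dsimp only
    rw [Set.uIcc_of_le hab] at hx
    rw [hderiv_f2 htau x hx, abs_zero]
  have e3 : (∫ x in β..(β + τ), |hderiv α β τ x|) = 1 := by
    rw [intervalIntegral.integral_congr (g := fun x => -D3 β τ x), int_negD3 htau]
    intro x hx
    dsimp only
    rw [Set.uIcc_of_le (by linarith)] at hx
    rw [hderiv_f3 htau hab x hx, abs_of_nonpos (D3_nonpos htau hx)]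
  have i1 : IntervalIntegrable (fun x => |hderiv α β τ x|) volume (α - τ) α := by
    apply II_congr (by linarith) (g := fun x => |D1 α τ x|)
      (fun x hx => by rw [hderiv_f1 htau x hx]) ((continuous_D1.abs).intervalIntegrable _ _)
  have i2 : IntervalIntegrable (fun x => |hderiv α β τ x|) volume α β := by
    apply II_congr hab (g := fun _ => (0:ℝ))
      (fun x hx => by rw [hderiv_f2 htau x hx, abs_zero]) (intervalIntegrable_const)
  have i3 : IntervalIntegrable (fun x => |hderiv α β τ x|) volume β (β + τ) := by
    apply II_congr (by linarith) (g := fun x => |D3 β τ x|)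
      (fun x hx => by rw [hderiv_f3 htau hab x hx]) ((continuous_D3.abs).intervalIntegrable _ _)
  rw [← intervalIntegral.integral_add_adjacent_intervals (i1.trans i2) i3,
    ← intervalIntegral.integral_add_adjacent_intervals i1 i2, e1, e2, e3]
  norm_num

lemma gd_half : gd (1/2) = 3/2 := by norm_num [gd]

lemma int_abs_DD1 (htau : 0 < τ) : ∫ x in (α - τ)..α, |DD1 α τ x| = 3 / τ := by
  have key1 : (∫ x in (α - τ)..(α - τ/2), |DD1 α τ x|) = 3 / (2*τ) := by
    rw [intervalIntegral.integral_congr (g := DD1 α τ)]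
    · rw [intervalIntegral.integral_eq_sub_of_hasDerivAt (fun x _ => hasDerivAt_D1 x)
        (continuous_DD1.intervalIntegrable _ _)]
      have h1 : (α - τ/2 - α + τ) / τ = 1/2 := by field_simp; ring
      have h2 : (α - τ - α + τ) / τ = 0 := by field_simp; ring
      rw [D1, D1, h1, h2, gd_half, gd_zero, zero_div, sub_zero]
      ring
    · intro x hx
      dsimp only
      rw [Set.uIcc_of_le (by linarith)] at hx
      have hu : (x - α + τ) / τ ≤ 1/2 := by rw [div_le_iff₀ htau]; linarith [hx.2]
      have hu0 : 0 ≤ (x - α + τ) / τ := div_nonneg (by linarith [hx.1]) htau.le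
      rw [abs_of_nonneg]
      rw [DD1]
      apply div_nonneg _ (by positivity)
      rw [gdd]; nlinarith
  have key2 : (∫ x in (α - τ/2)..α, |DD1 α τ x|) = 3 / (2*τ) := by
    rw [intervalIntegral.integral_congr (g := fun x => -DD1 α τ x)]
    · rw [intervalIntegral.integral_eq_sub_of_hasDerivAt (f := fun x => -D1 α τ x)
        (fun x _ => (hasDerivAt_D1 x).neg) ((continuous_DD1.neg).intervalIntegrable _ _)]
      have h1 : (α - τ/2 - α + τ) / τ = 1/2 := by field_simp; ring
      have h2 : (α - α + τ) / τ = 1 := by field_simp; ring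
      rw [D1, D1, h1, h2, gd_half, gd_one, zero_div]
      ring
    · intro x hx
      dsimp only
      rw [Set.uIcc_of_le (by linarith)] at hx
      have hu : 1/2 ≤ (x - α + τ) / τ := by rw [le_div_iff₀ htau]; linarith [hx.1]
      have hu1 : (x - α + τ) / τ ≤ 1 := by rw [div_le_one htau]; linarith [hx.2]
      rw [abs_of_nonpos]
      rw [DD1]
      apply div_nonpos_of_nonpos_of_nonneg _ (by positivity)
      rw [gdd]; nlinarith
  have i1 : IntervalIntegrable (fun x => |DD1 α τ x|) volume (α - τ) (α - τ/2) :=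
    (continuous_DD1.abs).intervalIntegrable _ _
  have i2 : IntervalIntegrable (fun x => |DD1 α τ x|) volume (α - τ/2) α :=
    (continuous_DD1.abs).intervalIntegrable _ _
  rw [← intervalIntegral.integral_add_adjacent_intervals i1 i2, key1, key2]
  field_simp
  ring

lemma int_abs_DD3 (htau : 0 < τ) : ∫ x in β..(β + τ), |DD3 β τ x| = 3 / τ := by
  have key1 : (∫ x in β..(β + τ/2), |DD3 β τ x|) = 3 / (2*τ) := by
    rw [intervalIntegral.integral_congr (g := fun x => -DD3 β τ x)]
    · rw [intervalIntegral.integral_eq_sub_of_hasDerivAt (f := fun x => -D3 β τ x)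
        (fun x _ => (hasDerivAt_D3 x).neg) ((continuous_DD3.neg).intervalIntegrable _ _)]
      have h1 : (β + τ - (β + τ/2)) / τ = 1/2 := by field_simp; ring
      have h2 : (β + τ - β) / τ = 1 := by field_simp; ring
      rw [D3, D3, h1, h2, gd_half, gd_one]
      field_simp; norm_num
    · intro x hx
      dsimp only
      rw [Set.uIcc_of_le (by linarith)] at hx
      have hu : 1/2 ≤ (β + τ - x) / τ := by rw [le_div_iff₀ htau]; linarith [hx.2]
      have hu1 : (β + τ - x) / τ ≤ 1 := by rw [div_le_one htau]; linarith [hx.1]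
      rw [abs_of_nonpos]
      rw [DD3]
      apply div_nonpos_of_nonpos_of_nonneg _ (by positivity)
      rw [gdd]; nlinarith
  have key2 : (∫ x in (β + τ/2)..(β + τ), |DD3 β τ x|) = 3 / (2*τ) := by
    rw [intervalIntegral.integral_congr (g := DD3 β τ)]
    · rw [intervalIntegral.integral_eq_sub_of_hasDerivAt (fun x _ => hasDerivAt_D3 x)
        (continuous_DD3.intervalIntegrable _ _)]
      have h1 : (β + τ - (β + τ/2)) / τ = 1/2 := by field_simp; ring
      have h2 : (β + τ - (β + τ)) / τ = 0 := by field_simp; ring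
      rw [D3, D3, h1, h2, gd_half, gd_zero]
      field_simp; norm_num
    · intro x hx
      dsimp only
      rw [Set.uIcc_of_le (by linarith)] at hx
      have hu : (β + τ - x) / τ ≤ 1/2 := by rw [div_le_iff₀ htau]; linarith [hx.1]
      have hu0 : 0 ≤ (β + τ - x) / τ := div_nonneg (by linarith [hx.2]) htau.le
      rw [abs_of_nonneg]
      rw [DD3]
      apply div_nonneg _ (by positivity)
      rw [gdd]; nlinarith
  have i1 : IntervalIntegrable (fun x => |DD3 β τ x|) volume β (β + τ/2) :=
    (continuous_DD3.abs).intervalIntegrable _ _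
  have i2 : IntervalIntegrable (fun x => |DD3 β τ x|) volume (β + τ/2) (β + τ) :=
    (continuous_DD3.abs).intervalIntegrable _ _
  rw [← intervalIntegral.integral_add_adjacent_intervals i1 i2, key1, key2]
  field_simp
  ring

end integrals

section bounds
variable {α β τ : ℝ}

lemma hasDerivAt_cexp_mul (c : ℂ) (x : ℝ) :
    HasDerivAt (fun x : ℝ => Complex.exp (c * x)) (c * Complex.exp (c * x)) x := by
  have h0 : HasDerivAt (fun x : ℝ => ((x : ℝ) : ℂ)) 1 x := by
    simpa using (hasDerivAt_id x).ofReal_comp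
  have h1 : HasDerivAt (fun x : ℝ => c * ((x : ℝ) : ℂ)) c x := by
    simpa using h0.const_mul c
  simpa [mul_comm] using h1.cexp

lemma hasDerivAt_vfun {c : ℂ} (hc : c ≠ 0) (x : ℝ) :
    HasDerivAt (fun x : ℝ => Complex.exp (c * x) / c) (Complex.exp (c * x)) x := by
  have := (hasDerivAt_cexp_mul c x).div_const c
  exact this.congr_deriv (by field_simp)

lemma hasDerivAt_wfun {c : ℂ} (hc : c ≠ 0) (x : ℝ) :
    HasDerivAt (fun x : ℝ => Complex.exp (c * x) / c ^ 2) (Complex.exp (c * x) / c) x := by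
  have := (hasDerivAt_cexp_mul c x).div_const (c ^ 2)
  exact this.congr_deriv (by field_simp)

lemma norm_exp_mI {A : ℝ} (x : ℝ) : ‖Complex.exp (-Complex.I * (A : ℂ) * x)‖ = 1 := by
  rw [Complex.norm_exp]
  have : (-Complex.I * (A : ℂ) * x).re = 0 := by simp
  rw [this, Real.exp_zero]

lemma norm_mIc {A : ℝ} (hA : 0 < A) : ‖-Complex.I * (A : ℂ)‖ = A := by
  rw [norm_mul]
  simp [abs_of_pos hA]

lemma II_hderivC (htau : 0 < τ) (hab : α ≤ β) :
    IntervalIntegrable (fun x => (hderiv α β τ x : ℂ)) volume (α - τ) (β + τ) := by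
  have i1 : IntervalIntegrable (fun x => (hderiv α β τ x : ℂ)) volume (α - τ) α :=
    II_congr (by linarith) (g := fun x => (D1 α τ x : ℂ))
      (fun x hx => by dsimp only; rw [hderiv_f1 htau x hx])
      ((Complex.continuous_ofReal.comp continuous_D1).intervalIntegrable _ _)
  have i2 : IntervalIntegrable (fun x => (hderiv α β τ x : ℂ)) volume α β :=
    II_congr hab (g := fun _ => (0 : ℂ))
      (fun x hx => by dsimp only; rw [hderiv_f2 htau x hx]; norm_num)
      intervalIntegrable_const
  have i3 : IntervalIntegrable (fun x => (hderiv α β τ x : ℂ)) volume β (β + τ) :=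
    II_congr (by linarith) (g := fun x => (D3 β τ x : ℂ))
      (fun x hx => by dsimp only; rw [hderiv_f3 htau hab x hx])
      ((Complex.continuous_ofReal.comp continuous_D3).intervalIntegrable _ _)
  exact (i1.trans i2).trans i3

/-- the master IBP identity: `2π c_a = -∫ h' v`. -/
lemma fourierC_ibp (htau : 0 < τ) (hab : α ≤ β) (hlen : β - α + 2 * τ < 2 * Real.pi)
    {a : ℤ} (ha : 0 < a) :
    fourierC α β τ a = (1 / (2 * Real.pi)) *
      -(∫ x in (α - τ)..(β + τ), (hderiv α β τ x : ℂ) *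
          (Complex.exp (-Complex.I * ((a : ℝ) : ℂ) * x) / (-Complex.I * ((a : ℝ) : ℂ)))) := by
  have hA : (0 : ℝ) < (a : ℝ) := by exact_mod_cast ha
  set c : ℂ := -Complex.I * ((a : ℝ) : ℂ) with hc
  have hcne : c ≠ 0 := by
    intro h
    have := norm_mIc hA
    rw [← hc, h] at this
    simp at this
    linarith
  rw [fourierC_eq htau hab hlen a]
  congr 1
  have harg : ∀ x : ℝ, -Complex.I * (a : ℂ) * (x : ℂ) = c * x := by
    intro x; rw [hc]; push_cast; ring
  have hibp := intervalIntegral.integral_mul_deriv_eq_deriv_mul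
    (u := fun x => (hfun α β τ x : ℂ)) (u' := fun x => (hderiv α β τ x : ℂ))
    (v := fun x => Complex.exp (c * x) / c) (v' := fun x => Complex.exp (c * x))
    (a := α - τ) (b := β + τ)
    (fun x _ => (hasDerivAt_hfun htau hab x).ofReal_comp)
    (fun x _ => hasDerivAt_vfun hcne x)
    (II_hderivC htau hab)
    ((Complex.continuous_exp.comp (by fun_prop)).intervalIntegrable _ _)
  simp only [harg]
  rw [hibp]
  rw [hfun_e0 (α - τ) le_rfl, hfun_e4 htau hab (β + τ) le_rfl]
  norm_num

lemma abs_fourierC_le_one (htau : 0 < τ) (hab : α ≤ β) (hlen : β - α + 2 * τ < 2 * Real.pi)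
    {a : ℤ} (ha : 0 < a) :
    ‖fourierC α β τ a‖ ≤ 1 / (Real.pi * (a : ℝ)) := by
  have hpi := Real.pi_pos
  have hA : (0 : ℝ) < (a : ℝ) := by exact_mod_cast ha
  set c : ℂ := -Complex.I * ((a : ℝ) : ℂ) with hc
  have hnc : ‖c‖ = (a : ℝ) := norm_mIc hA
  rw [fourierC_ibp htau hab hlen ha]
  rw [norm_mul, norm_neg]
  have h1 : ‖1 / (2 * (Real.pi : ℂ))‖ = 1 / (2 * Real.pi) := by
    rw [norm_div, norm_one, norm_mul, Complex.norm_two, Complex.norm_real, Real.norm_eq_abs, abs_of_pos hpi]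
  rw [h1]
  have h2 : ‖(∫ x in (α - τ)..(β + τ),
      (hderiv α β τ x : ℂ) * (Complex.exp (c * x) / c))‖ ≤ 2 * ((a : ℝ))⁻¹ := by
    refine le_trans (intervalIntegral.norm_integral_le_integral_norm (by linarith)) ?_
    have hnorm : ∀ x : ℝ, ‖(hderiv α β τ x : ℂ) * (Complex.exp (c * x) / c)‖ =
        |hderiv α β τ x| * ((a : ℝ))⁻¹ := by
      intro x
      rw [norm_mul, norm_div, hnc, hc, norm_exp_mI, Complex.norm_real, Real.norm_eq_abs]
      ring
    calc (∫ x in (α - τ)..(β + τ), ‖(hderiv α β τ x : ℂ) * (Complex.exp (c * x) / c)‖)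
        = ∫ x in (α - τ)..(β + τ), |hderiv α β τ x| * ((a : ℝ))⁻¹ := by
          apply intervalIntegral.integral_congr; intro x _; exact hnorm x
      _ = (∫ x in (α - τ)..(β + τ), |hderiv α β τ x|) * ((a : ℝ))⁻¹ :=
          intervalIntegral.integral_mul_const _ _
      _ = 2 * ((a : ℝ))⁻¹ := by rw [int_abs_hderiv htau hab]
      _ ≤ 2 * ((a : ℝ))⁻¹ := le_rfl

  calc (1 / (2 * Real.pi)) * ‖(∫ x in (α - τ)..(β + τ),
        (hderiv α β τ x : ℂ) * (Complex.exp (c * x) / c))‖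
      ≤ (1 / (2 * Real.pi)) * (2 * ((a : ℝ))⁻¹) := by
        apply mul_le_mul_of_nonneg_left h2 (by positivity)
    _ = 1 / (Real.pi * (a : ℝ)) := by field_simp
end bounds

section bound2
variable {α β τ : ℝ}

lemma abs_fourierC_le_two (htau : 0 < τ) (hab : α ≤ β) (hlen : β - α + 2 * τ < 2 * Real.pi)
    {a : ℤ} (ha : 0 < a) :
    ‖fourierC α β τ a‖ ≤ 3 / (Real.pi * τ * (a : ℝ) ^ 2) := by
  have hpi := Real.pi_pos
  have hA : (0 : ℝ) < (a : ℝ) := by exact_mod_cast ha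
  set c : ℂ := -Complex.I * ((a : ℝ) : ℂ) with hc
  have hnc : ‖c‖ = (a : ℝ) := norm_mIc hA
  have hcne : c ≠ 0 := by
    intro h; rw [h] at hnc; simp at hnc; linarith
  set v : ℝ → ℂ := fun x => Complex.exp (c * x) / c with hv
  set w : ℝ → ℂ := fun x => Complex.exp (c * x) / c ^ 2 with hw
  have hvcont : Continuous v := (Complex.continuous_exp.comp (by fun_prop)).div_const c
  have hnv : ∀ x : ℝ, ‖v x‖ = ((a : ℝ))⁻¹ := fun x => by
    rw [hv]; dsimp only; rw [norm_div, hnc, hc, norm_exp_mI]; ring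
  have hnw : ∀ x : ℝ, ‖w x‖ = (((a : ℝ)) ^ 2)⁻¹ := fun x => by
    rw [hw]; dsimp only; rw [norm_div, norm_pow, hnc, hc, norm_exp_mI]; ring
  -- boundary values
  have hD1a : D1 α τ α = 0 := by
    rw [D1]; have : (α - α + τ) / τ = 1 := by field_simp; ring
    rw [this, gd_one, zero_div]
  have hD1L : D1 α τ (α - τ) = 0 := by
    rw [D1]; have : (α - τ - α + τ) / τ = 0 := by field_simp; ring
    rw [this, gd_zero, zero_div]
  have hD3b : D3 β τ β = 0 := by
    rw [D3]; have : (β + τ - β) / τ = 1 := by field_simp; ring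
    rw [this, gd_one]; norm_num
  have hD3R : D3 β τ (β + τ) = 0 := by
    rw [D3]; have : (β + τ - (β + τ)) / τ = 0 := by field_simp; ring
    rw [this, gd_zero]; norm_num
  -- bound on up ramp
  have e1 : ‖∫ x in (α - τ)..α, (hderiv α β τ x : ℂ) * v x‖ ≤ 3 / τ * (((a : ℝ)) ^ 2)⁻¹ := by
    have hcongr : (∫ x in (α - τ)..α, (hderiv α β τ x : ℂ) * v x) =
        ∫ x in (α - τ)..α, (D1 α τ x : ℂ) * v x := by
      apply intervalIntegral.integral_congr
      intro x hx
      rw [Set.uIcc_of_le (by linarith)] at hx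
      dsimp only
      rw [hderiv_f1 htau x hx]
    have hibp := intervalIntegral.integral_mul_deriv_eq_deriv_mul
      (u := fun x => (D1 α τ x : ℂ)) (u' := fun x => (DD1 α τ x : ℂ))
      (v := w) (v' := v) (a := α - τ) (b := α)
      (fun x _ => (hasDerivAt_D1 x).ofReal_comp)
      (fun x _ => hasDerivAt_wfun hcne x)
      ((Complex.continuous_ofReal.comp continuous_DD1).intervalIntegrable _ _)
      (hvcont.intervalIntegrable _ _)
    rw [hcongr, hibp]
    rw [hD1a, hD1L]
    simp only [Complex.ofReal_zero, zero_mul, zero_sub, sub_zero, norm_neg]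
    refine le_trans (intervalIntegral.norm_integral_le_integral_norm
      (show α - τ ≤ α by linarith)) ?_
    have : (∫ x in (α - τ)..α, ‖(DD1 α τ x : ℂ) * w x‖) =
        (∫ x in (α - τ)..α, |DD1 α τ x|) * (((a : ℝ)) ^ 2)⁻¹ := by
      rw [← intervalIntegral.integral_mul_const]
      apply intervalIntegral.integral_congr
      intro x _
      dsimp only
      rw [norm_mul, hnw x, Complex.norm_real, Real.norm_eq_abs]
    rw [this, int_abs_DD1 htau]
  -- middle is zero
  have e2 : (∫ x in α..β, (hderiv α β τ x : ℂ) * v x) = 0 := by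
    rw [intervalIntegral.integral_congr (g := fun _ => 0), intervalIntegral.integral_zero]
    intro x hx
    rw [Set.uIcc_of_le hab] at hx
    dsimp only
    rw [hderiv_f2 htau x hx]
    norm_num
  -- bound on down ramp
  have e3 : ‖∫ x in β..(β + τ), (hderiv α β τ x : ℂ) * v x‖ ≤ 3 / τ * (((a : ℝ)) ^ 2)⁻¹ := by
    have hcongr : (∫ x in β..(β + τ), (hderiv α β τ x : ℂ) * v x) =
        ∫ x in β..(β + τ), (D3 β τ x : ℂ) * v x := by
      apply intervalIntegral.integral_congr
      intro x hx
      rw [Set.uIcc_of_le (by linarith)] at hx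
      dsimp only
      rw [hderiv_f3 htau hab x hx]
    have hibp := intervalIntegral.integral_mul_deriv_eq_deriv_mul
      (u := fun x => (D3 β τ x : ℂ)) (u' := fun x => (DD3 β τ x : ℂ))
      (v := w) (v' := v) (a := β) (b := β + τ)
      (fun x _ => (hasDerivAt_D3 x).ofReal_comp)
      (fun x _ => hasDerivAt_wfun hcne x)
      ((Complex.continuous_ofReal.comp continuous_DD3).intervalIntegrable _ _)
      (hvcont.intervalIntegrable _ _)
    rw [hcongr, hibp]
    rw [hD3b, hD3R]
    simp only [Complex.ofReal_zero, zero_mul, zero_sub, sub_zero, norm_neg]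
    refine le_trans (intervalIntegral.norm_integral_le_integral_norm
      (show β ≤ β + τ by linarith)) ?_
    have : (∫ x in β..(β + τ), ‖(DD3 β τ x : ℂ) * w x‖) =
        (∫ x in β..(β + τ), |DD3 β τ x|) * (((a : ℝ)) ^ 2)⁻¹ := by
      rw [← intervalIntegral.integral_mul_const]
      apply intervalIntegral.integral_congr
      intro x _
      dsimp only
      rw [norm_mul, hnw x, Complex.norm_real, Real.norm_eq_abs]
    rw [this, int_abs_DD3 htau]
  -- integrability of pieces
  have i1 : IntervalIntegrable (fun x => (hderiv α β τ x : ℂ) * v x) volume (α - τ) α :=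
    II_congr (by linarith) (g := fun x => (D1 α τ x : ℂ) * v x)
      (fun x hx => by dsimp only; rw [hderiv_f1 htau x hx])
      (((Complex.continuous_ofReal.comp continuous_D1).mul hvcont).intervalIntegrable _ _)
  have i2 : IntervalIntegrable (fun x => (hderiv α β τ x : ℂ) * v x) volume α β :=
    II_congr hab (g := fun _ => (0 : ℂ))
      (fun x hx => by dsimp only; rw [hderiv_f2 htau x hx]; norm_num)
      intervalIntegrable_const
  have i3 : IntervalIntegrable (fun x => (hderiv α β τ x : ℂ) * v x) volume β (β + τ) :=
    II_congr (by linarith) (g := fun x => (D3 β τ x : ℂ) * v x)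
      (fun x hx => by dsimp only; rw [hderiv_f3 htau hab x hx])
      (((Complex.continuous_ofReal.comp continuous_D3).mul hvcont).intervalIntegrable _ _)
  have hsplit : (∫ x in (α - τ)..(β + τ), (hderiv α β τ x : ℂ) * v x) =
      (∫ x in (α - τ)..α, (hderiv α β τ x : ℂ) * v x) +
      (∫ x in α..β, (hderiv α β τ x : ℂ) * v x) +
      (∫ x in β..(β + τ), (hderiv α β τ x : ℂ) * v x) := by
    rw [intervalIntegral.integral_add_adjacent_intervals i1 i2,
      intervalIntegral.integral_add_adjacent_intervals (i1.trans i2) i3]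
  have hmain : ‖∫ x in (α - τ)..(β + τ), (hderiv α β τ x : ℂ) * v x‖ ≤
      6 / τ * (((a : ℝ)) ^ 2)⁻¹ := by
    rw [hsplit, e2, add_zero]
    refine le_trans (norm_add_le _ _) ?_
    have h6 : 6 / τ * (((a : ℝ)) ^ 2)⁻¹ = 3 / τ * (((a : ℝ)) ^ 2)⁻¹ + 3 / τ * (((a : ℝ)) ^ 2)⁻¹ := by
      ring
    rw [h6]
    exact add_le_add e1 e3
  rw [fourierC_ibp htau hab hlen ha, norm_mul, norm_neg]
  have h1 : ‖1 / (2 * (Real.pi : ℂ))‖ = 1 / (2 * Real.pi) := by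
    rw [norm_div, norm_one, norm_mul, Complex.norm_two, Complex.norm_real, Real.norm_eq_abs, abs_of_pos hpi]
  rw [h1]
  have h2 : ‖(∫ x in (α - τ)..(β + τ), (hderiv α β τ x : ℂ) *
      (Complex.exp (-Complex.I * ((a : ℝ) : ℂ) * x) / (-Complex.I * ((a : ℝ) : ℂ))))‖ ≤
      6 / τ * (((a : ℝ)) ^ 2)⁻¹ := by
    exact hmain
  calc (1 / (2 * Real.pi)) * ‖(∫ x in (α - τ)..(β + τ), (hderiv α β τ x : ℂ) *
        (Complex.exp (-Complex.I * ((a : ℝ) : ℂ) * x) / (-Complex.I * ((a : ℝ) : ℂ))))‖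
      ≤ (1 / (2 * Real.pi)) * (6 / τ * (((a : ℝ)) ^ 2)⁻¹) :=
        mul_le_mul_of_nonneg_left h2 (by positivity)
    _ = 3 / (Real.pi * τ * (a : ℝ) ^ 2) := by field_simp; ring

end bound2

section sums

lemma sum_inv_sqrt_le (N : ℕ) :
    ∑ a ∈ Finset.Icc 1 N, 1 / Real.sqrt a ≤ 2 * Real.sqrt N := by
  induction N with
  | zero => simp
  | succ N ih =>
    rw [Finset.sum_Icc_succ_top (by omega)]
    have hs := Real.sqrt_nonneg (N : ℝ)
    have hs2 : Real.sqrt (N : ℝ) ^ 2 = N := Real.sq_sqrt (by positivity)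
    have ht : (0:ℝ) < Real.sqrt ((N:ℝ) + 1) := Real.sqrt_pos.2 (by positivity)
    have ht2 : Real.sqrt ((N:ℝ) + 1) ^ 2 = (N:ℝ) + 1 := Real.sq_sqrt (by positivity)
    have hcast : ((N + 1 : ℕ) : ℝ) = (N : ℝ) + 1 := by push_cast; ring
    rw [hcast]
    have hkey : 1 / Real.sqrt ((N:ℝ) + 1) ≤ 2 * Real.sqrt ((N:ℝ)+1) - 2 * Real.sqrt (N:ℝ) := by
      rw [div_le_iff₀ ht]
      nlinarith [sq_nonneg (Real.sqrt (N:ℝ) - Real.sqrt ((N:ℝ)+1))]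
    linarith

lemma sum_inv_pow32_le (M : ℕ) (hM : 1 ≤ M) (N : ℕ) :
    ∑ a ∈ Finset.Icc (M + 1) N, 1 / ((a : ℝ) * Real.sqrt a) ≤ 2 / Real.sqrt M := by
  rcases le_or_gt N M with hNM | hMN
  · rw [Finset.Icc_eq_empty (by omega), Finset.sum_empty]
    positivity
  · have main : ∀ N, M ≤ N → ∑ a ∈ Finset.Icc (M + 1) N, 1 / ((a : ℝ) * Real.sqrt a) ≤
        2 / Real.sqrt M - 2 / Real.sqrt N := by
      intro N hN
      induction N, hN using Nat.le_induction with
      | base => rw [Finset.Icc_eq_empty (by omega), Finset.sum_empty]; simp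
      | succ N hN ih =>
        rw [Finset.sum_Icc_succ_top (by omega)]
        have hN1 : 1 ≤ N := le_trans hM hN
        have hNpos : (0:ℝ) < (N:ℝ) := by exact_mod_cast Nat.pos_of_ne_zero (by omega)
        have hcast : ((N + 1 : ℕ) : ℝ) = (N : ℝ) + 1 := by push_cast; ring
        rw [hcast]
        set s := Real.sqrt (N:ℝ) with hsdef
        set t := Real.sqrt ((N:ℝ)+1) with htdef
        have hs : 0 < s := Real.sqrt_pos.2 hNpos
        have ht : 0 < t := Real.sqrt_pos.2 (by positivity)
        have hs2 : s^2 = N := Real.sq_sqrt hNpos.le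
        have ht2 : t^2 = (N:ℝ)+1 := Real.sq_sqrt (by positivity)
        have hst : s ≤ t := Real.sqrt_le_sqrt (by linarith)
        have hts : (t - s)*(t + s) = 1 := by nlinarith
        have hkey : 1/(((N:ℝ)+1) * t) ≤ 2/s - 2/t := by
          have h2 : 2/s - 2/t = 2/(s*t*(t+s)) := by
            rw [div_sub_div _ _ hs.ne' ht.ne', eq_div_iff (by positivity)]
            field_simp
            linear_combination hts
          rw [h2, ← ht2, div_le_div_iff₀ (by positivity) (by positivity)]
          nlinarith [mul_nonneg (mul_nonneg ht.le (show (0:ℝ) ≤ 2*t+s by positivity))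
            (sub_nonneg.2 hst)]
        linarith [ih]
    have h := main N hMN.le
    have : (0:ℝ) ≤ 2 / Real.sqrt N := by positivity
    linarith

end sums

/-- With `τ = 1/q` for an integer `q ≥ 1`, the nonnegative Fourier coefficients of
`h_{α,β,τ}` satisfy `∑_{a=0}^∞ √a |c_a| ≤ (4√3/π) q^{1/2}`. -/
theorem fourier_coeff_sqrt_sum_bound (q : ℕ) (hq : 1 ≤ q) (τ : ℝ) (hτ : τ = 1 / (q : ℝ))
    (α β : ℝ) (hab : α ≤ β) (hlen : β - α + 2 * τ < 2 * Real.pi) :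
    ∑' a : ℕ, Real.sqrt (a : ℝ) * ‖fourierC α β τ (a : ℤ)‖ ≤
      (4 * Real.sqrt 3 / Real.pi) * Real.sqrt (q : ℝ) := by

  have hpi := Real.pi_pos
  have hq0 : (0:ℝ) < (q:ℝ) := by exact_mod_cast hq
  have htau : 0 < τ := by rw [hτ]; positivity
  set t : ℕ → ℝ := fun a => Real.sqrt (a:ℝ) * ‖fourierC α β τ (a:ℤ)‖ with htdef
  have htnn : ∀ a, 0 ≤ t a := fun a => mul_nonneg (Real.sqrt_nonneg _) (norm_nonneg _)
  apply Real.tsum_le_of_sum_range_le htnn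
  intro n
  set M := 3*q with hM
  have hM1 : 1 ≤ M := by omega
  have hMr : ((M:ℕ):ℝ) = 3*(q:ℝ) := by rw [hM]; push_cast; ring
  -- head term bound
  have hhead : ∀ a : ℕ, a ∈ Finset.Icc 1 M → t a ≤ (1/Real.pi) * (1/Real.sqrt a) := by
    intro a ha
    simp only [Finset.mem_Icc] at ha
    have ha0 : (0:ℝ) < (a:ℝ) := by exact_mod_cast ha.1
    have hb := abs_fourierC_le_one htau hab hlen (a := (a:ℤ)) (by exact_mod_cast ha.1)
    have hcast : (((a:ℕ):ℤ):ℝ) = (a:ℝ) := by push_cast; ring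
    rw [hcast] at hb
    have hs : 0 < Real.sqrt (a:ℝ) := Real.sqrt_pos.2 ha0
    have hss := Real.mul_self_sqrt ha0.le
    calc t a ≤ Real.sqrt (a:ℝ) * (1/(Real.pi * (a:ℝ))) :=
          mul_le_mul_of_nonneg_left hb (Real.sqrt_nonneg _)
      _ = (1/Real.pi) * (1/Real.sqrt (a:ℝ)) := by
          field_simp
          linear_combination hss
  -- tail term bound
  have htail : ∀ a : ℕ, a ∈ Finset.Icc (M+1) n → t a ≤
      (3*(q:ℝ)/Real.pi) * (1/((a:ℝ)*Real.sqrt a)) := by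
    intro a ha
    simp only [Finset.mem_Icc] at ha
    have ha1 : 1 ≤ a := by omega
    have ha0 : (0:ℝ) < (a:ℝ) := by exact_mod_cast ha1
    have hb := abs_fourierC_le_two htau hab hlen (a := (a:ℤ)) (by exact_mod_cast ha1)
    have hcast : (((a:ℕ):ℤ):ℝ) = (a:ℝ) := by push_cast; ring
    rw [hcast] at hb
    have heq : 3 / (Real.pi * τ * (a:ℝ)^2) = 3*(q:ℝ)/(Real.pi * (a:ℝ)^2) := by
      rw [hτ]; field_simp
    rw [heq] at hb
    have hs : 0 < Real.sqrt (a:ℝ) := Real.sqrt_pos.2 ha0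
    have hss := Real.mul_self_sqrt ha0.le
    calc t a ≤ Real.sqrt (a:ℝ) * (3*(q:ℝ)/(Real.pi * (a:ℝ)^2)) :=
          mul_le_mul_of_nonneg_left hb (Real.sqrt_nonneg _)
      _ = (3*(q:ℝ)/Real.pi) * (1/((a:ℝ)*Real.sqrt (a:ℝ))) := by
          field_simp
          linear_combination hss
  -- assemble the finite sum
  have hsub : Finset.range n ⊆ ({0} : Finset ℕ) ∪ Finset.Icc 1 M ∪ Finset.Icc (M+1) n := by
    intro a han
    simp only [Finset.mem_range] at han
    simp only [Finset.mem_union, Finset.mem_singleton, Finset.mem_Icc]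
    omega
  have hd1 : Disjoint ({0} : Finset ℕ) (Finset.Icc 1 M) := by
    rw [Finset.disjoint_left]; intro a ha ha2
    simp only [Finset.mem_singleton] at ha
    simp only [Finset.mem_Icc] at ha2
    omega
  have hd2 : Disjoint (({0} : Finset ℕ) ∪ Finset.Icc 1 M) (Finset.Icc (M+1) n) := by
    rw [Finset.disjoint_left]; intro a ha ha2
    simp only [Finset.mem_union, Finset.mem_singleton, Finset.mem_Icc] at ha
    simp only [Finset.mem_Icc] at ha2
    omega
  have ht0 : t 0 = 0 := by simp [htdef]
  have hheadsum : ∑ i ∈ Finset.Icc 1 M, t i ≤ (1/Real.pi) * (2*Real.sqrt (M:ℝ)) := by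
    calc ∑ i ∈ Finset.Icc 1 M, t i ≤ ∑ i ∈ Finset.Icc 1 M, (1/Real.pi) * (1/Real.sqrt (i:ℝ)) :=
          Finset.sum_le_sum hhead
      _ = (1/Real.pi) * ∑ i ∈ Finset.Icc 1 M, 1/Real.sqrt (i:ℝ) := by rw [Finset.mul_sum]
      _ ≤ (1/Real.pi) * (2*Real.sqrt (M:ℝ)) := by
          apply mul_le_mul_of_nonneg_left (sum_inv_sqrt_le M) (by positivity)
  have htailsum : ∑ i ∈ Finset.Icc (M+1) n, t i ≤ (3*(q:ℝ)/Real.pi) * (2/Real.sqrt (M:ℝ)) := by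
    calc ∑ i ∈ Finset.Icc (M+1) n, t i
        ≤ ∑ i ∈ Finset.Icc (M+1) n, (3*(q:ℝ)/Real.pi) * (1/((i:ℝ)*Real.sqrt (i:ℝ))) :=
          Finset.sum_le_sum htail
      _ = (3*(q:ℝ)/Real.pi) * ∑ i ∈ Finset.Icc (M+1) n, 1/((i:ℝ)*Real.sqrt (i:ℝ)) := by
          rw [Finset.mul_sum]
      _ ≤ (3*(q:ℝ)/Real.pi) * (2/Real.sqrt (M:ℝ)) := by
          apply mul_le_mul_of_nonneg_left (sum_inv_pow32_le M hM1 n) (by positivity)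
  have hfinal : (1/Real.pi) * (2*Real.sqrt (M:ℝ)) + (3*(q:ℝ)/Real.pi) * (2/Real.sqrt (M:ℝ)) =
      (4 * Real.sqrt 3 / Real.pi) * Real.sqrt (q:ℝ) := by
    rw [hMr]
    set S := Real.sqrt (3*(q:ℝ)) with hSdef
    have hS0 : 0 < S := Real.sqrt_pos.2 (by positivity)
    have hSS : S * S = 3*(q:ℝ) := Real.mul_self_sqrt (by positivity)
    have hsplit : S = Real.sqrt 3 * Real.sqrt (q:ℝ) := by
      rw [hSdef, Real.sqrt_mul (by norm_num)]
    have h1 : (3*(q:ℝ))/S = S := by rw [div_eq_iff hS0.ne']; linarith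
    calc (1/Real.pi) * (2*S) + (3*(q:ℝ)/Real.pi) * (2/S)
        = (2/Real.pi) * S + (2/Real.pi) * ((3*(q:ℝ))/S) := by ring
      _ = (2/Real.pi) * S + (2/Real.pi) * S := by rw [h1]
      _ = (4 * Real.sqrt 3 / Real.pi) * Real.sqrt (q:ℝ) := by rw [hsplit]; ring
  calc ∑ i ∈ Finset.range n, t i
      ≤ ∑ i ∈ ({0} : Finset ℕ) ∪ Finset.Icc 1 M ∪ Finset.Icc (M+1) n, t i :=
        Finset.sum_le_sum_of_subset_of_nonneg hsub (fun i _ _ => htnn i)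
    _ = (∑ i ∈ ({0} : Finset ℕ) ∪ Finset.Icc 1 M, t i) + ∑ i ∈ Finset.Icc (M+1) n, t i :=
        Finset.sum_union hd2
    _ = (t 0 + ∑ i ∈ Finset.Icc 1 M, t i) + ∑ i ∈ Finset.Icc (M+1) n, t i := by
        rw [Finset.sum_union hd1, Finset.sum_singleton]
    _ ≤ (0 + (1/Real.pi) * (2*Real.sqrt (M:ℝ))) + (3*(q:ℝ)/Real.pi) * (2/Real.sqrt (M:ℝ)) :=
        add_le_add (add_le_add (le_of_eq ht0) hheadsum) htailsum
    _ = (4 * Real.sqrt 3 / Real.pi) * Real.sqrt (q:ℝ) := by rw [zero_add, hfinal]
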